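/- arXiv:1406.5345 — 2 statements merged into one kernel-verified Lean document; each statement's English description precedes it below -/
import Mathlib

section
/- For every positive integer n, the sum over k from 0 to n of binomial(2n+1, 2k) * (2^(2k-1) - 1) * B_{2k} equals 0, where B_{2k} denotes the (2k)-th Bernoulli number. -/
open PowerSeries Finset Nat

lemma bernoulli_poly_eval_half {m : ℕ} (hodd : Odd m) (hm : 1 < m) :
    (Polynomial.bernoulli m).eval (1/2 : ℚ) = 0 := by
  set G : PowerSeries ℚ :=
    PowerSeries.mk fun n => Polynomial.aeval (1/2 : ℚ) ((1 / n ! : ℚ) • Polynomial.bernoulli n)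
    with hGdef
  have hG : G * (exp ℚ - 1) = X * rescale (1/2 : ℚ) (exp ℚ) :=
    Polynomial.bernoulli_generating_function (1/2 : ℚ)
  have h2 : rescale (-1 : ℚ) G * (rescale (-1 : ℚ) (exp ℚ) - 1)
      = (-X) * rescale (-(1/2) : ℚ) (exp ℚ) := by
    have := congrArg (rescale (-1 : ℚ)) hG
    rw [map_mul, map_sub, map_one, map_mul] at this
    rw [this, rescale_neg_one_X, rescale_rescale]
    norm_num
  have hE1 : exp ℚ = rescale (1 : ℚ) (exp ℚ) := by rw [rescale_one]; rfl
  have hB : rescale (-1 : ℚ) (exp ℚ) * exp ℚ = 1 := by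
    calc rescale (-1 : ℚ) (exp ℚ) * exp ℚ
        = rescale (-1 : ℚ) (exp ℚ) * rescale (1 : ℚ) (exp ℚ) := by rw [← hE1]
      _ = rescale (-1 + 1 : ℚ) (exp ℚ) := exp_mul_exp_eq_exp_add _ _
      _ = 1 := by norm_num [rescale_zero, constantCoeff_exp]
  have hC : rescale (-(1/2) : ℚ) (exp ℚ) * exp ℚ = rescale (1/2 : ℚ) (exp ℚ) := by
    calc rescale (-(1/2) : ℚ) (exp ℚ) * exp ℚ
        = rescale (-(1/2) : ℚ) (exp ℚ) * rescale (1 : ℚ) (exp ℚ) := by rw [← hE1]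
      _ = rescale (-(1/2) + 1 : ℚ) (exp ℚ) := exp_mul_exp_eq_exp_add _ _
      _ = rescale (1/2 : ℚ) (exp ℚ) := by norm_num
  have h3 : rescale (-1 : ℚ) G * (exp ℚ - 1) = G * (exp ℚ - 1) := by
    have h := congrArg (· * exp ℚ) h2
    rw [mul_assoc, sub_mul, one_mul, hB, mul_assoc, hC] at h
    linear_combination -h - hG
  have hexp : (exp ℚ - 1 : PowerSeries ℚ) ≠ 0 := by
    intro h
    have := congrArg (PowerSeries.coeff 1) h
    simp [coeff_exp] at this
  have h4 : rescale (-1 : ℚ) G = G := mul_right_cancel₀ hexp h3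
  have h5 := congrArg (PowerSeries.coeff m) h4
  simp only [coeff_rescale, hGdef, coeff_mk, hodd.neg_one_pow] at h5
  have h6 : Polynomial.aeval (1/2 : ℚ) ((1 / m ! : ℚ) • Polynomial.bernoulli m) = 0 := by
    linarith
  have h7 : (1 / m ! : ℚ) * (Polynomial.bernoulli m).eval (1/2 : ℚ) = 0 := by
    simpa [Polynomial.aeval_def, Polynomial.eval₂_eq_eval_map, smul_eq_mul] using h6
  have hfac : (1 / m ! : ℚ) ≠ 0 := by
    simp [Nat.factorial_ne_zero]
  rcases mul_eq_zero.mp h7 with h | h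
  · exact absurd h hfac
  · exact h

lemma bernoulli_odd_zero' {j : ℕ} (hodd : Odd j) (hj : 1 < j) : bernoulli j = 0 := by
  rw [bernoulli_eq_bernoulli'_of_ne_one (by omega), bernoulli'_eq_zero_of_odd hodd hj]

lemma sum_two_pow_choose_bernoulli {m : ℕ} (hodd : Odd m) (hm : 1 < m) :
    ∑ j ∈ Finset.range (m + 1), (m.choose j : ℚ) * 2 ^ j * bernoulli j = 0 := by
  have he : (Polynomial.bernoulli m).eval (1/2 : ℚ)
      = ∑ i ∈ Finset.range (m + 1), bernoulli i * m.choose i * (1/2 : ℚ) ^ (m - i) := by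
    simp [Polynomial.bernoulli, Polynomial.eval_finset_sum, Polynomial.eval_monomial]
  have h0 := bernoulli_poly_eval_half hodd hm
  rw [he] at h0
  have : ∑ j ∈ Finset.range (m + 1), (m.choose j : ℚ) * 2 ^ j * bernoulli j
      = (2:ℚ)^m * ∑ i ∈ Finset.range (m + 1), bernoulli i * m.choose i * (1/2 : ℚ) ^ (m - i) := by
    rw [Finset.mul_sum]
    refine Finset.sum_congr rfl fun j hj => ?_
    have hjm : j ≤ m := Finset.mem_range_succ_iff.mp hj
    have h2 : (2:ℚ)^m = 2^(m-j) * 2^j := by rw [← pow_add]; congr 1; omega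
    rw [h2, one_div, inv_pow]
    field_simp
  rw [this, h0, mul_zero]

lemma sum_range_two_mul (f : ℕ → ℚ) (N : ℕ) :
    ∑ j ∈ Finset.range (2 * N), f j = ∑ k ∈ Finset.range N, (f (2 * k) + f (2 * k + 1)) := by
  induction N with
  | zero => simp
  | succ N ih =>
    rw [show 2 * (N + 1) = (2 * N + 1) + 1 by ring, Finset.sum_range_succ, Finset.sum_range_succ,
      ih, Finset.sum_range_succ]
    ring

theorem sum_choose_bernoulli_eq_zero (n : ℕ) (hn : 0 < n) :
    ∑ k ∈ Finset.range (n + 1),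
      (Nat.choose (2 * n + 1) (2 * k) : ℚ) * ((2 : ℚ) ^ (2 * (k : ℤ) - 1) - 1) *
        bernoulli (2 * k) = 0 := by
  set m := 2 * n + 1 with hm
  set f : ℕ → ℚ := fun j => (m.choose j : ℚ) * ((2 : ℚ) ^ ((j : ℤ) - 1) - 1) * bernoulli j
    with hf
  have hfe : ∀ j : ℕ, f j = (1/2 : ℚ) * ((m.choose j : ℚ) * 2 ^ j * bernoulli j)
      - (m.choose j : ℚ) * bernoulli j := by
    intro j
    have : (2 : ℚ) ^ ((j : ℤ) - 1) = 2 ^ j / 2 := by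
      rw [zpow_sub₀ (two_ne_zero), zpow_natCast, zpow_one]
    rw [hf]; simp only
    rw [this]; ring
  have hstep1 : ∑ k ∈ Finset.range (n + 1),
      (Nat.choose (2 * n + 1) (2 * k) : ℚ) * ((2 : ℚ) ^ (2 * (k : ℤ) - 1) - 1) *
        bernoulli (2 * k) = ∑ k ∈ Finset.range (n + 1), f (2 * k) := by
    refine Finset.sum_congr rfl fun k _ => ?_
    rw [hf, hm]; push_cast; ring_nf
  have hoddf : ∀ k : ℕ, f (2 * k + 1) = 0 := by
    intro k
    rcases Nat.eq_zero_or_pos k with hk | hk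
    · subst hk; rw [hf]; norm_num
    · rw [hf]; simp only
      rw [bernoulli_odd_zero' ⟨k, by ring⟩ (by omega), mul_zero]
  have hsplit : ∑ j ∈ Finset.range (2 * (n + 1)), f j = ∑ k ∈ Finset.range (n + 1), f (2 * k) := by
    rw [sum_range_two_mul]
    simp [hoddf]
  have hT := sum_two_pow_choose_bernoulli (m := m) ⟨n, by omega⟩ (by omega)
  have hS : ∑ j ∈ Finset.range (m + 1), (m.choose j : ℚ) * bernoulli j = 0 := by
    rw [Finset.sum_range_succ, sum_bernoulli, bernoulli_odd_zero' ⟨n, by omega⟩ (by omega)]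
    simp [hm]
    omega
  rw [hstep1, ← hsplit, show 2 * (n + 1) = m + 1 by omega]
  calc ∑ j ∈ Finset.range (m + 1), f j
      = (1/2 : ℚ) * (∑ j ∈ Finset.range (m + 1), (m.choose j : ℚ) * 2 ^ j * bernoulli j)
        - ∑ j ∈ Finset.range (m + 1), (m.choose j : ℚ) * bernoulli j := by
        rw [Finset.mul_sum, ← Finset.sum_sub_distrib]
        exact Finset.sum_congr rfl fun j _ => hfe j
    _ = 0 := by rw [hT, hS]; ring
end

section
/- For every positive integer n, zeta(2n) = (-1)^(n+1) * pi^(2n) / (2 * (2^(2n) - 1)) * sum over k from 0 to n-1 of E_{2k} / ((2k)! * (2(n-k)-1)!), where zeta is the Riemann zeta function and E_{2k} are the Euler numbers. -/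
open Finset PowerSeries
open scoped ContDiff


lemma my_iteratedDeriv_add {f g : ℝ → ℝ} (hf : ContDiff ℝ ∞ f) (hg : ContDiff ℝ ∞ g)
    (n : ℕ) (x : ℝ) :
    iteratedDeriv n (fun y => f y + g y) x = iteratedDeriv n f x + iteratedDeriv n g x := by
  simp only [← iteratedDerivWithin_univ]
  exact iteratedDerivWithin_add (Set.mem_univ x) uniqueDiffOn_univ
    (hf.contDiffWithinAt.of_le (by exact_mod_cast le_top)) (hg.contDiffWithinAt.of_le (by exact_mod_cast le_top))

lemma leibniz_aux (a b : ℕ → ℝ) (n : ℕ) :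
    (∑ k ∈ range (n + 1), (n.choose k : ℝ) * a (k + 1) * b (n - k)) +
      (∑ k ∈ range (n + 1), (n.choose k : ℝ) * a k * b (n + 1 - k)) =
    ∑ k ∈ range (n + 2), ((n + 1).choose k : ℝ) * a k * b (n + 1 - k) := by
  have h1 : ∑ k ∈ range (n + 2), ((n + 1).choose k : ℝ) * a k * b (n + 1 - k)
      = (∑ k ∈ range (n + 1), ((n + 1).choose (k + 1) : ℝ) * a (k + 1) * b (n - k))
        + a 0 * b (n + 1) := by
    rw [Finset.sum_range_succ' (fun k => ((n + 1).choose k : ℝ) * a k * b (n + 1 - k)) (n + 1)]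
    simp
  have h2 : ∑ k ∈ range (n + 1), ((n : ℕ).choose k : ℝ) * a k * b (n + 1 - k)
      = (∑ k ∈ range n, (n.choose (k + 1) : ℝ) * a (k + 1) * b (n - k)) + a 0 * b (n + 1) := by
    rw [Finset.sum_range_succ' (fun k => ((n : ℕ).choose k : ℝ) * a k * b (n + 1 - k)) n]
    simp [Nat.succ_sub_succ]
  have h3 : ∑ k ∈ range (n + 1), ((n : ℕ).choose (k + 1) : ℝ) * a (k + 1) * b (n - k)
      = ∑ k ∈ range n, (n.choose (k + 1) : ℝ) * a (k + 1) * b (n - k) := by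
    rw [Finset.sum_range_succ]
    simp
  rw [h1, h2, ← h3, ← add_assoc, ← Finset.sum_add_distrib]
  congr 1
  apply Finset.sum_congr rfl
  intro k hk
  rw [Nat.choose_succ_succ]
  push_cast
  ring

lemma my_iteratedDeriv_mul (n : ℕ) :
    ∀ (f g : ℝ → ℝ), ContDiff ℝ ∞ f → ContDiff ℝ ∞ g → ∀ x : ℝ,
    iteratedDeriv n (fun y => f y * g y) x =
      ∑ k ∈ range (n + 1), (n.choose k : ℝ) * iteratedDeriv k f x * iteratedDeriv (n - k) g x := by
  induction n with
  | zero => intro f g hf hg x; simp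
  | succ n ih =>
    intro f g hf hg x
    have hf' : ContDiff ℝ ∞ (deriv f) := (contDiff_infty_iff_deriv.mp hf).2
    have hg' : ContDiff ℝ ∞ (deriv g) := (contDiff_infty_iff_deriv.mp hg).2
    have hd : deriv (fun y => f y * g y) = fun y => deriv f y * g y + f y * deriv g y := by
      funext y
      exact deriv_mul (hf.differentiable (by norm_num) y)
        (hg.differentiable (by norm_num) y)
    rw [iteratedDeriv_succ', hd]
    have := my_iteratedDeriv_add (f := fun y => deriv f y * g y)
      (g := fun y => f y * deriv g y) (hf'.mul hg) (hf.mul hg') n x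
    rw [this, ih (deriv f) g hf' hg x, ih f (deriv g) hf hg' x]
    have e1 : ∀ k, iteratedDeriv k (deriv f) x = iteratedDeriv (k + 1) f x := by
      intro k; rw [iteratedDeriv_succ']
    have e2 : ∀ k, iteratedDeriv k (deriv g) x = iteratedDeriv (k + 1) g x := by
      intro k; rw [iteratedDeriv_succ']
    simp only [e1, e2]
    have e3 : ∀ k ∈ range (n + 1), (n.choose k : ℝ) * iteratedDeriv k f x
        * iteratedDeriv (n - k + 1) g x
        = (n.choose k : ℝ) * iteratedDeriv k f x * iteratedDeriv (n + 1 - k) g x := by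
      intro k hk
      rw [Finset.mem_range] at hk
      congr 2
      omega
    rw [Finset.sum_congr rfl e3]
    exact leibniz_aux (fun k => iteratedDeriv k f x) (fun k => iteratedDeriv k g x) n

/-- The Euler numbers, defined via the generating function `1 / cosh t = ∑ Eₙ tⁿ / n!`,
i.e. as derivatives of `1 / cosh` at `0`. -/
noncomputable def eulerNumber (n : ℕ) : ℝ :=
  iteratedDeriv n (fun t : ℝ => 1 / Real.cosh t) 0

lemma contDiff_sech : ContDiff ℝ ∞ (fun t : ℝ => 1 / Real.cosh t) :=
  contDiff_const.div Real.contDiff_cosh (fun x => (Real.cosh_pos x).ne')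

lemma iteratedDeriv_cosh (n : ℕ) :
    iteratedDeriv n Real.cosh = if Even n then Real.cosh else Real.sinh := by
  induction n with
  | zero => simp
  | succ n ih =>
    rw [iteratedDeriv_succ, ih]
    by_cases h : Even n
    · simp [h, Nat.even_add_one, Real.deriv_cosh]
    · simp [h, Nat.even_add_one, Real.deriv_sinh]

lemma iteratedDeriv_cosh_zero (n : ℕ) :
    iteratedDeriv n Real.cosh 0 = if Even n then 1 else 0 := by
  rw [iteratedDeriv_cosh]
  by_cases h : Even n <;> simp [h]

lemma iteratedDeriv_const_fun (n : ℕ) (c : ℝ) (x : ℝ) :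
    iteratedDeriv n (fun _ : ℝ => c) x = if n = 0 then c else 0 := by
  induction n generalizing c x with
  | zero => simp
  | succ n ih =>
    rw [iteratedDeriv_succ']
    simp only [deriv_const']
    simp [ih]

lemma iteratedDeriv_one_fun (n : ℕ) (x : ℝ) :
    iteratedDeriv n (fun _ : ℝ => (1 : ℝ)) x = if n = 0 then 1 else 0 :=
  iteratedDeriv_const_fun n 1 x

lemma euler_recursion (n : ℕ) :
    ∑ k ∈ range (n + 1), (n.choose k : ℝ) * eulerNumber k *
      (if Even (n - k) then (1 : ℝ) else 0) = if n = 0 then 1 else 0 := by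
  have hmul : ∀ y : ℝ, (1 / Real.cosh y) * Real.cosh y = 1 := by
    intro y
    field_simp [(Real.cosh_pos y).ne']
  have h := my_iteratedDeriv_mul n (fun t : ℝ => 1 / Real.cosh t) Real.cosh
    contDiff_sech Real.contDiff_cosh 0
  have h2 : (fun y : ℝ => (1 / Real.cosh y) * Real.cosh y) = fun _ : ℝ => (1:ℝ) := by
    funext y; exact hmul y
  rw [h2, iteratedDeriv_one_fun] at h
  rw [h]
  apply Finset.sum_congr rfl
  intro k hk
  rw [iteratedDeriv_cosh_zero]
  rfl


noncomputable def Ch : ℝ⟦X⟧ := PowerSeries.mk fun m => if Even m then (1:ℝ) / m.factorial else 0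
noncomputable def Sh : ℝ⟦X⟧ := PowerSeries.mk fun m => if Even m then 0 else (1:ℝ) / m.factorial
noncomputable def Tau : ℝ⟦X⟧ := PowerSeries.mk fun m =>
  if m = 0 then 0 else
    2 ^ (m+1) * (2 ^ (m+1) - 1) * ((bernoulli (m+1) : ℝ)) / (m+1).factorial

lemma coeff_bps (m : ℕ) :
    PowerSeries.coeff m (bernoulliPowerSeries ℝ) = (bernoulli m : ℝ) / m.factorial := by
  simp [bernoulliPowerSeries, algebraMap]

lemma T1 : X * Tau = rescale 4 (bernoulliPowerSeries ℝ) - rescale 2 (bernoulliPowerSeries ℝ) + X := by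
  ext m
  rcases m with _ | m
  · have h4 : (constantCoeff (R := ℝ)) ((rescale 4) (bernoulliPowerSeries ℝ)) = 1 := by
      rw [← coeff_zero_eq_constantCoeff_apply, coeff_rescale, coeff_bps]; simp
    have h2 : (constantCoeff (R := ℝ)) ((rescale 2) (bernoulliPowerSeries ℝ)) = 1 := by
      rw [← coeff_zero_eq_constantCoeff_apply, coeff_rescale, coeff_bps]; simp
    simp [Tau, h4, h2]
  · rw [coeff_succ_X_mul]
    simp only [map_add, map_sub, coeff_rescale, coeff_bps, PowerSeries.coeff_X, Tau, coeff_mk]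
    rcases m with _ | m
    · norm_num [bernoulli_one]
    · have hb : (4:ℝ) ^ (m + 1 + 1) = (2 ^ (m+1+1)) * 2 ^ (m+1+1) := by
        rw [← mul_pow]; norm_num
      simp only [if_neg (Nat.succ_ne_zero _), Nat.succ_ne_zero, if_false]
      rw [hb]
      have : (m + 1 + 1 = 1) = False := by simp
      simp only [this, if_false]
      ring

lemma coeff_exp_real (m : ℕ) : PowerSeries.coeff m (exp ℝ) = 1 / m.factorial := by
  simp [PowerSeries.coeff_exp, algebraMap]

lemma he2_ne : rescale 2 (exp ℝ) - 1 ≠ 0 := by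
  intro h
  have := congrArg (PowerSeries.coeff 1) h
  simp [coeff_rescale, coeff_exp_real, PowerSeries.coeff_one] at this

lemma T2 : Tau * (rescale 2 (exp ℝ) + 1) = rescale 2 (exp ℝ) - 1 := by
  set E2 := rescale 2 (exp ℝ) with hE2
  have h2 : rescale 2 (bernoulliPowerSeries ℝ) * (E2 - 1) = C (R := ℝ) 2 * X := by
    have := congrArg (rescale (2:ℝ)) (bernoulliPowerSeries_mul_exp_sub_one ℝ)
    rwa [map_mul, map_sub, map_one, rescale_X] at this
  have h4 : rescale 4 (bernoulliPowerSeries ℝ) * (rescale 4 (exp ℝ) - 1) = C (R := ℝ) 4 * X := by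
    have := congrArg (rescale (4:ℝ)) (bernoulliPowerSeries_mul_exp_sub_one ℝ)
    rwa [map_mul, map_sub, map_one, rescale_X] at this
  have h44 : E2 * E2 = rescale 4 (exp ℝ) := by
    rw [hE2, exp_mul_exp_eq_exp_add]; norm_num
  have h4' : rescale 4 (bernoulliPowerSeries ℝ) * (E2 * E2 - 1) = C (R := ℝ) 4 * X := by
    rw [h44]; exact h4
  have hX : (X : ℝ⟦X⟧) * (E2 - 1) ≠ 0 := mul_ne_zero PowerSeries.X_ne_zero he2_ne
  have hC2 : (C (R := ℝ) 2 : ℝ⟦X⟧) = 2 := (map_ofNat (C (R := ℝ)) 2)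
  have hC4 : (C (R := ℝ) 4 : ℝ⟦X⟧) = 4 := (map_ofNat (C (R := ℝ)) 4)
  rw [hC2] at h2; rw [hC4] at h4'
  have key : (Tau * (E2 + 1)) * (X * (E2 - 1)) = (E2 - 1) * (X * (E2 - 1)) := by
    linear_combination (E2 * E2 - 1) * T1 + h4' - (E2 + 1) * h2
  exact mul_right_cancel₀ hX key

lemma two_eq_C : (2 : ℝ⟦X⟧) = C (R := ℝ) 2 := (map_ofNat (C (R := ℝ)) 2).symm

lemma ChSh : (2 : ℝ⟦X⟧) * Ch = exp ℝ + rescale (-1) (exp ℝ) ∧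
    (2 : ℝ⟦X⟧) * Sh = exp ℝ - rescale (-1) (exp ℝ) := by
  constructor <;> ext m <;>
    rw [two_eq_C] <;>
    simp only [coeff_C_mul, map_add, map_sub, coeff_rescale, coeff_exp_real, Ch, Sh, coeff_mk] <;>
    rcases Nat.even_or_odd m with h | h
  · rw [if_pos h, h.neg_one_pow]; ring
  · rw [if_neg (Nat.not_even_iff_odd.mpr h), h.neg_one_pow]; ring
  · rw [if_pos h, h.neg_one_pow]; ring
  · rw [if_neg (Nat.not_even_iff_odd.mpr h), h.neg_one_pow]; ring

lemma T3 : Tau * Ch = Sh := by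
  obtain ⟨hc, hs⟩ := ChSh
  have h := congrArg (· * rescale (-1) (exp ℝ)) T2
  have hme : rescale 2 (exp ℝ) * rescale (-1) (exp ℝ) = exp ℝ := by
    rw [exp_mul_exp_eq_exp_add]; norm_num [rescale_one]
  have h2 : Tau * (exp ℝ + rescale (-1) (exp ℝ)) = exp ℝ - rescale (-1) (exp ℝ) := by
    linear_combination h + (1 - Tau) * hme
  rw [← hc, ← hs] at h2
  have : (2 : ℝ⟦X⟧) * (Tau * Ch) = 2 * Sh := by linear_combination h2
  have h2ne : (2 : ℝ⟦X⟧) ≠ 0 := by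
    rw [two_eq_C]
    intro hh
    have := congrArg (constantCoeff (R := ℝ)) hh
    simp at this
  exact mul_left_cancel₀ h2ne this

lemma hCh0 : constantCoeff (R := ℝ) Ch = 1 := by
  rw [← coeff_zero_eq_constantCoeff_apply]
  simp [Ch]

lemma inv_recursion (n : ℕ) :
    ∑ k ∈ range (n + 1), (PowerSeries.coeff k Ch⁻¹) *
      (if Even (n - k) then (1:ℝ) / (n - k).factorial else 0) = if n = 0 then 1 else 0 := by
  have h : Ch⁻¹ * Ch = 1 := PowerSeries.inv_mul_cancel Ch (by rw [hCh0]; exact one_ne_zero)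
  have h2 := congrArg (PowerSeries.coeff n) h
  rw [PowerSeries.coeff_mul, Finset.Nat.sum_antidiagonal_eq_sum_range_succ_mk,
    PowerSeries.coeff_one] at h2
  rw [← h2]
  apply Finset.sum_congr rfl
  intro k hk
  simp [Ch]

lemma euler_eq_coeff_inv (n : ℕ) :
    eulerNumber n = n.factorial * PowerSeries.coeff n Ch⁻¹ := by
  induction n using Nat.strong_induction_on with
  | _ n ih =>
    have hE := euler_recursion n
    have hI := inv_recursion n
    rw [Finset.sum_range_succ] at hE hI
    simp only [Nat.sub_self, Nat.choose_self, Nat.cast_one, one_mul, Even.zero, if_pos,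
      Nat.factorial_zero, Nat.cast_one, div_one] at hE hI
    -- hE : ∑ + eulerNumber n = δ ; hI : ∑ + coeff n Ch⁻¹ * 1 = δ
    have hEn : eulerNumber n = (if n = 0 then (1:ℝ) else 0)
        - ∑ k ∈ range n, (n.choose k : ℝ) * eulerNumber k *
          (if Even (n - k) then (1:ℝ) else 0) := by linarith [hE]
    have hIn : PowerSeries.coeff n Ch⁻¹ = (if n = 0 then (1:ℝ) else 0)
        - ∑ k ∈ range n, (PowerSeries.coeff k Ch⁻¹) *
          (if Even (n - k) then (1:ℝ) / (n - k).factorial else 0) := by linarith [hI]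
    rw [hEn, hIn, mul_sub, Finset.mul_sum]
    congr 1
    · rcases Nat.eq_zero_or_pos n with h | h 
      · simp [h]
      · simp [h.ne']
    · apply Finset.sum_congr rfl
      intro k hk
      rw [Finset.mem_range] at hk
      rw [ih k hk]
      by_cases hev : Even (n - k)
      · rw [if_pos hev, if_pos hev]
        have hfac : (n.choose k : ℝ) * k.factorial * (n - k).factorial = n.factorial := by
          exact_mod_cast congrArg (Nat.cast (R := ℝ))
            (Nat.choose_mul_factorial_mul_factorial hk.le)
        have hne : ((n - k).factorial : ℝ) ≠ 0 := Nat.cast_ne_zero.mpr (Nat.factorial_ne_zero _)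
        rw [← hfac]
        field_simp
      · rw [if_neg hev, if_neg hev]
        ring

lemma sum_range_even_odd (f : ℕ → ℝ) (n : ℕ) :
    ∑ k ∈ range (2 * n), f k = ∑ k ∈ range n, (f (2 * k) + f (2 * k + 1)) := by
  induction n with
  | zero => simp
  | succ n ih =>
    rw [Finset.sum_range_succ, ← ih, Nat.mul_succ, Finset.sum_range_succ, Finset.sum_range_succ]
    ring

lemma tau_eq : Tau = Ch⁻¹ * Sh := by
  have h : Ch * Ch⁻¹ = 1 := PowerSeries.mul_inv_cancel Ch (by rw [hCh0]; exact one_ne_zero)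
  calc Tau = Tau * (Ch * Ch⁻¹) := by rw [h, mul_one]
    _ = (Tau * Ch) * Ch⁻¹ := by ring
    _ = Sh * Ch⁻¹ := by rw [T3]
    _ = Ch⁻¹ * Sh := by ring

lemma sum_euler_eq_bernoulli (n : ℕ) (hn : 0 < n) :
    ∑ k ∈ range n, eulerNumber (2 * k) /
        ((2 * k).factorial * (2 * (n - k) - 1).factorial) =
      2 ^ (2 * n) * (2 ^ (2 * n) - 1) * (bernoulli (2 * n) : ℝ) / (2 * n).factorial := by
  have hcoeff : PowerSeries.coeff (2 * n - 1) Tau =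
      2 ^ (2 * n) * (2 ^ (2 * n) - 1) * (bernoulli (2 * n) : ℝ) / (2 * n).factorial := by
    rw [Tau, coeff_mk, if_neg (by omega)]
    have h1 : 2 * n - 1 + 1 = 2 * n := by omega
    rw [h1]
  rw [← hcoeff, tau_eq, PowerSeries.coeff_mul,
    Finset.Nat.sum_antidiagonal_eq_sum_range_succ_mk]
  have h2 : (2 * n - 1).succ = 2 * n := by omega
  simp only []
  rw [h2, sum_range_even_odd]
  apply Finset.sum_congr rfl
  intro k hk
  rw [Finset.mem_range] at hk
  have hS0 : PowerSeries.coeff (2 * n - 1 - (2 * k + 1)) Sh = 0 := by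
    rw [Sh, coeff_mk, if_pos ⟨n - 1 - k, by omega⟩]
  have hidx : 2 * n - 1 - 2 * k = 2 * (n - k) - 1 := by omega
  have hS1 : PowerSeries.coeff (2 * n - 1 - 2 * k) Sh
      = 1 / (2 * (n - k) - 1).factorial := by
    rw [Sh, coeff_mk, hidx, if_neg (fun ⟨r, hr⟩ => by omega)]
  rw [hS0, hS1, euler_eq_coeff_inv (2 * k)]
  have hne : ((2 * k).factorial : ℝ) ≠ 0 := Nat.cast_ne_zero.mpr (Nat.factorial_ne_zero _)
  have hne2 : ((2 * (n - k) - 1).factorial : ℝ) ≠ 0 :=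
    Nat.cast_ne_zero.mpr (Nat.factorial_ne_zero _)
  field_simp
  ring

theorem zeta_even_eq_sum_euler (n : ℕ) (hn : 0 < n) :
    riemannZeta (2 * n) =
      (-1) ^ (n + 1) * (Real.pi : ℂ) ^ (2 * n) / (2 * ((2 : ℂ) ^ (2 * n) - 1)) *
        ∑ k ∈ Finset.range n,
          (eulerNumber (2 * k) : ℂ) /
            ((Nat.factorial (2 * k)) * (Nat.factorial (2 * (n - k) - 1))) := by
  have hz := riemannZeta_two_mul_nat (k := n) hn.ne'
  have hS := sum_euler_eq_bernoulli n hn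
  have hsum : ∑ k ∈ Finset.range n,
          (eulerNumber (2 * k) : ℂ) /
            ((Nat.factorial (2 * k)) * (Nat.factorial (2 * (n - k) - 1)))
      = ((2 ^ (2 * n) * (2 ^ (2 * n) - 1) * (bernoulli (2 * n) : ℝ)
          / ((2 * n).factorial : ℝ) : ℝ) : ℂ) := by
    rw [← hS]
    push_cast
    rfl
  rw [hz, hsum]
  have h2pos : (1 : ℝ) < 2 ^ (2 * n) := one_lt_pow₀ one_lt_two (by omega)
  have h1 : ((2 : ℂ) ^ (2 * n) - 1) ≠ 0 := by
    have : ((2 : ℝ) ^ (2 * n) - 1 : ℝ) ≠ 0 := by linarith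
    simpa using Complex.ofReal_ne_zero.mpr this
  have h2 : (((2 * n).factorial : ℕ) : ℂ) ≠ 0 := Nat.cast_ne_zero.mpr (Nat.factorial_ne_zero _)
  have h3 : (2 : ℂ) ^ (2 * n) = 2 * 2 ^ (2 * n - 1) := by
    rw [← pow_succ']
    congr 1
    omega
  push_cast
  rw [h3] at h1 ⊢
  field_simp [h1, h2]
  ring_nf
  have h1' : (-1 + (2:ℂ) ^ (n * 2 - 1) * 2) ≠ 0 := by
    intro h; apply h1; rw [mul_comm 2 n]; linear_combination h
  field_simp
end
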